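/- Let k be an algebraically closed field, n ≥ 2, and I an ideal of k[x₁,...,xₙ] such that I ∩ k[x₁] = ⟨p⟩ for some nonconstant polynomial p ∈ k[x₁]. Then there exists a ∈ k with p(a) = 0 such that ev_a(I) ≠ k[x₂,...,xₙ] (the image ideal is proper). -/

import Mathlib

open MvPolynomial

/-- The evaluation homomorphism `ev_a : k[x₁,…,xₙ] → k[x₂,…,xₙ]`, `x₁ ↦ a`,
`xᵢ ↦ xᵢ₋₁` for `i ≥ 2`. -/
noncomputable def evalAt {k : Type*} [CommSemiring k] {n : ℕ} (a : k) :
    MvPolynomial (Fin (n + 1)) k →ₐ[k] MvPolynomial (Fin n) k :=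
  aeval (Fin.cases (C a) X)

/-- The canonical embedding `k[x₁] → k[x₁,…,xₙ]`. -/
noncomputable def univEmb (k : Type*) [CommSemiring k] (n : ℕ) :
    Polynomial k →ₐ[k] MvPolynomial (Fin (n + 1)) k :=
  Polynomial.aeval (X 0)

lemma evalAt_surjective {k : Type*} [CommSemiring k] {n : ℕ} (a : k) :
    Function.Surjective (evalAt (k := k) (n := n) a) := by
  intro g
  refine ⟨rename Fin.succ g, ?_⟩
  show aeval _ ((rename Fin.succ) g) = g
  rw [aeval_rename]
  have : (Fin.cases (C a) X ∘ Fin.succ : Fin n → MvPolynomial (Fin n) k) = X := by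
    funext j; simp
  rw [this]
  exact aeval_X_left_apply g

lemma dvd_of_evalAt_eq_zero {k : Type*} [CommRing k] {n : ℕ} (a : k)
    (f : MvPolynomial (Fin (n + 1)) k) (hf : evalAt a f = 0) :
    (X 0 - C a) ∣ f := by
  have key : ∀ g : MvPolynomial (Fin (n + 1)) k,
      evalAt a g = Polynomial.eval (C a) (finSuccEquiv k n g) := by
    intro g
    induction g using MvPolynomial.induction_on with
    | C c => simp [evalAt, finSuccEquiv_apply]
    | add q r hq hr => simp [hq, hr]
    | mul_X q i hq =>
      cases i using Fin.cases with
      | zero =>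
        rw [map_mul, map_mul, hq, finSuccEquiv_X_zero]
        simp [evalAt]
      | succ j =>
        rw [map_mul, map_mul, hq, finSuccEquiv_X_succ]
        simp [evalAt]
  have hroot : Polynomial.IsRoot (finSuccEquiv k n f) (C a) := by
    rw [Polynomial.IsRoot, ← key, hf]
  have hdvd := (Polynomial.dvd_iff_isRoot).mpr hroot
  have h2 := map_dvd (finSuccEquiv k n).symm hdvd
  have h3 : (finSuccEquiv k n).symm (Polynomial.X - Polynomial.C (C a)) = X 0 - C a := by
    have e1 : (finSuccEquiv k n).symm Polynomial.X = X 0 := by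
      rw [AlgEquiv.symm_apply_eq, finSuccEquiv_X_zero]
    have e2 : (finSuccEquiv k n).symm (Polynomial.C (C a)) = C a := by
      rw [AlgEquiv.symm_apply_eq, finSuccEquiv_apply]
      simp
    rw [map_sub, e1, e2]
  simpa [h3] using h2

/-- Lemma 1: if `k` is algebraically closed and `I ∩ k[x₁] = ⟨p⟩` with `p` nonconstant,
then there is a root `a` of `p` with `ev_a(I)` a proper ideal of `k[x₂,…,xₙ]`.
(Here the ambient ring has `n + 2 ≥ 2` variables.) -/
theorem lemma_base1 {k : Type*} [Field k] [IsAlgClosed k] (n : ℕ)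
    (I : Ideal (MvPolynomial (Fin (n + 2)) k)) (p : Polynomial k)
    (hp : 0 < p.degree)
    (hI : Ideal.comap (univEmb k (n + 1)) I = Ideal.span {p}) :
    ∃ a : k, p.eval a = 0 ∧ Ideal.map (evalAt a) I ≠ ⊤ := by
  set_option synthInstance.maxHeartbeats 1000000 in
  set_option maxHeartbeats 2000000 in
  by_contra hcon
  push_neg at hcon
  have hroot : ∀ a ∈ p.roots, ∃ f ∈ I, evalAt a f = 1 := by
    intro a ha
    have h0 : p.eval a = 0 := Polynomial.isRoot_of_mem_roots ha
    have htop := hcon a h0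
    have h1 : (1 : MvPolynomial (Fin (n+1)) k) ∈ Ideal.map (evalAt (n := n+1) a) I := by
      rw [htop]; trivial
    rwa [Ideal.mem_map_iff_of_surjective _ (evalAt_surjective a)] at h1
  choose f hfI hfev using hroot
  set P : MvPolynomial (Fin (n+2)) k :=
    (p.roots.attach.map (fun a => 1 - f a.1 a.2)).prod with hP
  -- P ≡ 1 mod I
  have hPmod : Ideal.Quotient.mk I P = 1 := by
    rw [hP, map_multiset_prod (Ideal.Quotient.mk I), Multiset.map_map]
    have h1 : ∀ a ∈ p.roots.attach,
        ((Ideal.Quotient.mk I) ∘ fun a => 1 - f a.1 a.2) a = (fun _ => (1 : _)) a := by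
      intro a _
      simp [Ideal.Quotient.eq_zero_iff_mem.mpr (hfI a.1 a.2)]
    rw [Multiset.map_congr rfl h1]
    simp
  -- divisibility
  have hdvd : (p.roots.attach.map (fun a => X 0 - C a.1)).prod ∣ P := by
    apply Multiset.prod_dvd_prod_of_dvd
    intro a _
    apply dvd_of_evalAt_eq_zero
    simp [hfev a.1 a.2]
  have hattach : (p.roots.attach.map (fun a : {x // x ∈ p.roots} => X 0 - C a.1)).prod
      = (univEmb k (n+1)) ((p.roots.map (fun a => Polynomial.X - Polynomial.C a)).prod) := by
    rw [map_multiset_prod (univEmb k (n+1)), Multiset.map_map]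
    congr 1
    rw [Multiset.attach_map_val' p.roots (fun a => X 0 - C a)]
    apply Multiset.map_congr rfl
    intro x _
    simp [univEmb]
  -- univEmb p ∈ I
  have hpI : univEmb k (n+1) p ∈ I := by
    have : p ∈ Ideal.span {p} := Ideal.mem_span_singleton_self p
    rw [← hI] at this
    exact this
  have hpne : p ≠ 0 := fun h => by simp [h] at hp
  have hsplit := IsAlgClosed.splits p
  have hfact := Polynomial.Splits.eq_prod_roots hsplit
  -- prod (X - C a) = C c⁻¹ * p
  have hlc : p.leadingCoeff ≠ 0 := Polynomial.leadingCoeff_ne_zero.mpr hpne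
  have hMI : (univEmb k (n+1)) ((p.roots.map (fun a => Polynomial.X - Polynomial.C a)).prod) ∈ I := by
    set M := (p.roots.map (fun a => Polynomial.X - Polynomial.C a)).prod with hM
    have h1 : univEmb k (n+1) (Polynomial.C p.leadingCoeff * M) ∈ I := by
      rw [← hfact]; exact hpI
    rw [map_mul] at h1
    have h2 : univEmb k (n+1) (Polynomial.C p.leadingCoeff) = C p.leadingCoeff := by
      simp [univEmb, Polynomial.aeval_C, algebraMap_eq]
    rw [h2] at h1
    have h3 : (C p.leadingCoeff⁻¹ : MvPolynomial (Fin (n+2)) k)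
        * (C p.leadingCoeff * univEmb k (n+1) M) = univEmb k (n+1) M := by
      rw [← mul_assoc, ← C_mul, inv_mul_cancel₀ hlc, C_1, one_mul]
    rw [← h3]
    exact I.mul_mem_left _ h1
  have hPI : P ∈ I := by
    obtain ⟨G, hG⟩ := hdvd
    rw [hG, hattach]
    exact I.mul_mem_right _ hMI
  have : (1 : MvPolynomial (Fin (n+2)) k) ∈ I := by
    have := Ideal.Quotient.eq_zero_iff_mem.mpr hPI
    rw [hPmod] at this
    exact Ideal.Quotient.eq_zero_iff_mem.mp this
  have hItop : I = ⊤ := Ideal.eq_top_iff_one I |>.mpr this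
  rw [hItop, Ideal.comap_top] at hI
  have := Ideal.span_singleton_eq_top.mp hI.symm
  have hd := Polynomial.degree_eq_zero_of_isUnit this
  rw [hd] at hp
  exact lt_irrefl _ hp
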